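/- Let x solve dx/dt = f(x) with x(0) = θ, δ solve the variational system with δ(0) = γ, λ solve the adjoint system backwards with λ(T) = ∇_x C(x(T;θ)), and ξ solve the second-order adjoint system dξ/dt = -(∇_x f(x))^T ξ - (∇_x(∇_x f(x) δ))^T λ backwards with ξ(T) = (H_x C(x(T;θ))) δ(T). Then ξ(0) = (H_θ C(x(T;θ))) γ, the Hessian of θ ↦ C(x(T;θ)) applied to γ. -/

import Mathlib

open Matrix

private lemma hasDerivAt_dotProduct' {d : ℕ} {a b : ℝ → Fin d → ℝ} {a' b' : Fin d → ℝ} {t : ℝ}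
    (ha : HasDerivAt a a' t) (hb : HasDerivAt b b' t) :
    HasDerivAt (fun s => a s ⬝ᵥ b s) (a' ⬝ᵥ b t + a t ⬝ᵥ b') t := by
  have h : ∀ i : Fin d,
      HasDerivAt (fun s => a s i * b s i) (a' i * b t i + a t i * b' i) t := by
    intro i
    have hai : HasDerivAt (fun s => a s i) (a' i) t :=
      ((ContinuousLinearMap.proj (R := ℝ) (φ := fun _ : Fin d => ℝ) i)).hasFDerivAt.comp_hasDerivAt t ha
    have hbi : HasDerivAt (fun s => b s i) (b' i) t :=
      ((ContinuousLinearMap.proj (R := ℝ) (φ := fun _ : Fin d => ℝ) i)).hasFDerivAt.comp_hasDerivAt t hb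
    exact hai.mul hbi
  have := HasDerivAt.fun_sum (u := Finset.univ) (fun i _ => h i)
  simpa [dotProduct, Finset.sum_add_distrib] using this


/-- Second-order adjoint proposition: if `x` solves `dx/dt = f(x)`, `x(0)=θ`,
`δ` solves the variational system with `δ(0)=γ`, `λ` solves the adjoint system
backwards with `λ(T) = ∇C(x(T;θ))`, and `ξ` solves the second-order adjoint
system backwards with `ξ(T) = (H_x C(x(T;θ))) δ(T)`, then
`ξ(0) = (H_θ C(x(T;θ))) γ`. -/
theorem second_order_adjoint_gives_hessian_vector
    (d : ℕ) (T : ℝ) (hT : 0 ≤ T)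
    (f : (Fin d → ℝ) → (Fin d → ℝ)) (hf : ContDiff ℝ 2 f)
    (C : (Fin d → ℝ) → ℝ) (hC : ContDiff ℝ 2 C)
    -- the flow of dx/dt = f(x)
    (X : ℝ → (Fin d → ℝ) → (Fin d → ℝ))
    (hX0 : ∀ θ' : Fin d → ℝ, X 0 θ' = θ')
    (hXode : ∀ (θ' : Fin d → ℝ) (t : ℝ),
      HasDerivAt (fun s => X s θ') (f (X t θ')) t)
    (hXsmooth : ∀ t : ℝ, ContDiff ℝ 2 (fun θ' => X t θ'))
    (θ γ : Fin d → ℝ)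
    -- Jacobian of f and Jacobian of x ↦ (∇f(x)) δ
    (Jf : (Fin d → ℝ) → Matrix (Fin d) (Fin d) ℝ)
    (hJf : ∀ (p v : Fin d → ℝ), fderiv ℝ f p v = (Jf p).mulVec v)
    (K : (Fin d → ℝ) → (Fin d → ℝ) → Matrix (Fin d) (Fin d) ℝ)
    (hK : ∀ (p δv v : Fin d → ℝ),
      fderiv ℝ (fun q => (Jf q).mulVec δv) p v = (K p δv).mulVec v)
    -- the family of solutions of the variational system and the fact that it
    -- is the derivative of the flow with respect to the initial condition
    (D : (Fin d → ℝ) → (Fin d → ℝ) → ℝ → (Fin d → ℝ))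
    (hD0 : ∀ θ' γ' : Fin d → ℝ, D θ' γ' 0 = γ')
    (hDode : ∀ (θ' γ' : Fin d → ℝ) (t : ℝ),
      HasDerivAt (D θ' γ') ((Jf (X t θ')).mulVec (D θ' γ' t)) t)
    (hvar : ∀ (θ' γ' : Fin d → ℝ) (t : ℝ),
      fderiv ℝ (fun p => X t p) θ' γ' = D θ' γ' t)
    -- the second variation of the flow (the θ-derivative of δ)
    (η : (Fin d → ℝ) → ℝ → (Fin d → ℝ))
    (hη0 : ∀ u : Fin d → ℝ, η u 0 = 0)
    (hηode : ∀ (u : Fin d → ℝ) (t : ℝ),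
      HasDerivAt (η u)
        ((K (X t θ) (D θ γ t)).mulVec (D θ u t)
          + (Jf (X t θ)).mulVec (η u t)) t)
    (h2var : ∀ (u : Fin d → ℝ) (t : ℝ),
      fderiv ℝ (fun p => D p γ t) θ u = η u t)
    -- the gradient and Hessian of C at x(T;θ)
    (gC : Fin d → ℝ)
    (hgC : ∀ v : Fin d → ℝ, fderiv ℝ C (X T θ) v = gC ⬝ᵥ v)
    (HCx : Matrix (Fin d) (Fin d) ℝ)
    (hHCx : ∀ v w : Fin d → ℝ,
      fderiv ℝ (fun q => fderiv ℝ C q w) (X T θ) v = v ⬝ᵥ HCx.mulVec w)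
    -- the adjoint solution λ with final condition λ(T) = ∇C(x(T;θ))
    (lam : ℝ → (Fin d → ℝ))
    (hlamode : ∀ t : ℝ,
      HasDerivAt lam (-((Jf (X t θ))ᵀ.mulVec (lam t))) t)
    (hlamT : lam T = gC)
    -- the second-order adjoint solution ξ with ξ(T) = (H_x C(x(T;θ))) δ(T)
    (ξ : ℝ → (Fin d → ℝ))
    (hξode : ∀ t : ℝ,
      HasDerivAt ξ
        (-((Jf (X t θ))ᵀ.mulVec (ξ t))
          - (K (X t θ) (D θ γ t))ᵀ.mulVec (lam t)) t)
    (hξT : ξ T = HCx.mulVec (D θ γ T))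
    -- the Hessian of the composed map θ' ↦ C(x(T;θ'))
    (Hθ : Matrix (Fin d) (Fin d) ℝ)
    (hHθ : ∀ v w : Fin d → ℝ,
      fderiv ℝ (fun q => fderiv ℝ (fun p => C (X T p)) q w) θ v
        = v ⬝ᵥ Hθ.mulVec w) :
    ξ 0 = Hθ.mulVec γ := by
  
  classical
  have hCd : Differentiable ℝ C := hC.differentiable two_ne_zero
  have hC' : ContDiff ℝ 1 (fderiv ℝ C) := hC.fderiv_right (by norm_num)
  have hXTd : Differentiable ℝ (fun p => X T p) := (hXsmooth T).differentiable two_ne_zero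
  have hG : ContDiff ℝ 1 (fderiv ℝ (fun p => X T p)) := (hXsmooth T).fderiv_right (by norm_num)
  -- second derivative of C at X T θ
  have hfd2 : HasFDerivAt (fderiv ℝ C) (fderiv ℝ (fderiv ℝ C) (X T θ)) (X T θ) :=
    (hC'.differentiable one_ne_zero (X T θ)).hasFDerivAt
  -- (f'' v) w = v ⬝ᵥ HCx w
  have hHCx' : ∀ v w : Fin d → ℝ,
      fderiv ℝ (fderiv ℝ C) (X T θ) v w = v ⬝ᵥ HCx.mulVec w := by
    intro v w
    have h1 : HasFDerivAt (fun q => fderiv ℝ C q w)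
        ((ContinuousLinearMap.apply ℝ ℝ w).comp (fderiv ℝ (fderiv ℝ C) (X T θ))) (X T θ) :=
      (ContinuousLinearMap.apply ℝ ℝ w).hasFDerivAt.comp (X T θ) hfd2
    have := h1.fderiv
    calc fderiv ℝ (fderiv ℝ C) (X T θ) v w
        = fderiv ℝ (fun q => fderiv ℝ C q w) (X T θ) v := by rw [this]; rfl
      _ = v ⬝ᵥ HCx.mulVec w := hHCx v w
  have key : ∀ u : Fin d → ℝ, ξ 0 ⬝ᵥ u = u ⬝ᵥ Hθ.mulVec γ := by
    intro u
    set F : ℝ → ℝ := fun t => ξ t ⬝ᵥ D θ u t + lam t ⬝ᵥ η u t with hFdef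
    have hF' : ∀ t, HasDerivAt F 0 t := by
      intro t
      have h1 := hasDerivAt_dotProduct' (hξode t) (hDode θ u t)
      have h2 := hasDerivAt_dotProduct' (hlamode t) (hηode u t)
      have h3 := h1.add h2
      refine HasDerivAt.congr_deriv (f := F) h3 ?_
      simp only [Matrix.mulVec_transpose, sub_dotProduct, neg_dotProduct, dotProduct_add,
        Matrix.dotProduct_mulVec]
      ring
    have hconst : F 0 = F T :=
      is_const_of_deriv_eq_zero (fun t => (hF' t).differentiableAt)
        (fun t => (hF' t).deriv) 0 T
    -- φ and ψ
    have hφ : HasFDerivAt (fun q => fderiv ℝ C (X T q))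
        ((fderiv ℝ (fderiv ℝ C) (X T θ)).comp (fderiv ℝ (fun p => X T p) θ)) θ :=
      hfd2.comp θ (hXTd θ).hasFDerivAt
    have hGd : HasFDerivAt (fderiv ℝ (fun p => X T p))
        (fderiv ℝ (fderiv ℝ (fun p => X T p)) θ) θ :=
      (hG.differentiable one_ne_zero θ).hasFDerivAt
    have hψ0 : HasFDerivAt (fun q => fderiv ℝ (fun p => X T p) q γ)
        ((ContinuousLinearMap.apply ℝ (Fin d → ℝ) γ).comp
          (fderiv ℝ (fderiv ℝ (fun p => X T p)) θ)) θ :=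
      (ContinuousLinearMap.apply ℝ (Fin d → ℝ) γ).hasFDerivAt.comp θ hGd
    have hψeq : (fun q => fderiv ℝ (fun p => X T p) q γ) = (fun q => D q γ T) := by
      funext q; exact hvar q γ T
    have hψ : HasFDerivAt (fun q => D q γ T)
        ((ContinuousLinearMap.apply ℝ (Fin d → ℝ) γ).comp
          (fderiv ℝ (fderiv ℝ (fun p => X T p)) θ)) θ := hψeq ▸ hψ0
    -- chain rule identity: fderiv of composed map applied to γ
    have hg : (fun q => fderiv ℝ (fun p => C (X T p)) q γ)
        = (fun q => fderiv ℝ C (X T q) (D q γ T)) := by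
      funext q
      have hcomp : fderiv ℝ (fun p => C (X T p)) q
          = (fderiv ℝ C (X T q)).comp (fderiv ℝ (fun p => X T p) q) :=
        fderiv_comp q (hCd (X T q)) (hXTd q)
      rw [hcomp]
      simp [hvar q γ T]
    -- differentiate q ↦ fderiv C (X T q) (D q γ T) at θ
    have hprod := hφ.clm_apply hψ
    have hHθu : u ⬝ᵥ Hθ.mulVec γ
        = (D θ u T) ⬝ᵥ HCx.mulVec (D θ γ T) + gC ⬝ᵥ η u T := by
      have h1 := (hHθ u γ).symm
      rw [hg] at h1
      rw [h1, hprod.fderiv]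
      have hψθ : D θ γ T = fderiv ℝ (fun p => X T p) θ γ := (hvar θ γ T).symm
      have hΨu : ((ContinuousLinearMap.apply ℝ (Fin d → ℝ) γ).comp
          (fderiv ℝ (fderiv ℝ (fun p => X T p)) θ)) u = η u T := by
        rw [← hψ.fderiv]; exact h2var u T
      simp only [ContinuousLinearMap.add_apply, ContinuousLinearMap.coe_comp',
        Function.comp_apply, ContinuousLinearMap.flip_apply]
      rw [show ((ContinuousLinearMap.apply ℝ (Fin d → ℝ)) γ)
            ((fderiv ℝ (fderiv ℝ fun p => X T p) θ) u) = η u T from hΨu,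
        hvar θ u T, hHCx' (D θ u T) (D θ γ T), hgC (η u T)]
      ring
    -- evaluate F at endpoints
    have hF0 : F 0 = ξ 0 ⬝ᵥ u := by
      simp [hFdef, hD0, hη0]
    have hFT : F T = u ⬝ᵥ Hθ.mulVec γ := by
      rw [hFdef]
      simp only [hξT, hlamT, hHθu]
      rw [dotProduct_comm (HCx.mulVec (D θ γ T)) (D θ u T)]
    rw [← hF0, hconst, hFT]
  funext i
  have := key (Pi.single i 1)
  simpa [dotProduct_single, single_dotProduct] using this
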